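/- In any parity game augmented with live groups, Player 0 has a positional (memoryless) winning strategy from every vertex of her winning region; in particular, if Player 0 has any winning strategy from a vertex v in the augmented game (G, Parity(ℙ), ψ_glive(ℋ)), then she has a positional one. -/

import Mathlib

universe u

/-- A two-player game graph: finite-intended vertex set `V`, an ownership function
(`owner v = 0` means `v` is a Player-0 vertex, `owner v = 1` a Player-1 vertex),
and an edge relation such that every vertex has at least one outgoing edge. -/
structure GameGraph (V : Type u) where
  owner : V → Fin 2
  E : V → V → Prop
  exists_succ : ∀ v, ∃ w, E v w

variable {V : Type u}

/-- A play of the game graph: an infinite sequence of vertices following edges. -/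
def IsPlay (G : GameGraph V) (ρ : ℕ → V) : Prop :=
  ∀ k, G.E (ρ k) (ρ (k + 1))

/-- A (history-dependent) strategy: given the list of previously visited
vertices and the current vertex, it chooses a next vertex. -/
abbrev Strategy (V : Type u) := List V → V → V

/-- A strategy of Player `i` is valid if at each Player-`i` vertex it chooses
an edge of the game graph. -/
def StratValid (G : GameGraph V) (i : Fin 2) (σ : Strategy V) : Prop :=
  ∀ (h : List V) (v : V), G.owner v = i → G.E v (σ h v)

/-- A positional (memoryless) strategy ignores the history. -/
def Positional (σ : Strategy V) : Prop :=
  ∀ (h h' : List V) (v : V), σ h v = σ h' v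

/-- A play is compliant with the strategy `σ` of Player `i` (a `σ`-play) if at
every Player-`i` vertex it moves to the vertex chosen by `σ`. -/
def Compliant (G : GameGraph V) (i : Fin 2) (σ : Strategy V) (ρ : ℕ → V) : Prop :=
  ∀ k, G.owner (ρ k) = i → ρ (k + 1) = σ (List.ofFn fun j : Fin k => ρ j.val) (ρ k)

/-- `σ` is a winning strategy for Player `i` from `v`, where `W` is the set of
plays that are winning for Player `i`. -/
def WinsFrom (G : GameGraph V) (i : Fin 2) (W : Set (ℕ → V)) (σ : Strategy V) (v : V) : Prop :=
  StratValid G i σ ∧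
    ∀ ρ : ℕ → V, IsPlay G ρ → Compliant G i σ ρ → ρ 0 = v → ρ ∈ W

/-- The winning region of Player `i`: the vertices from which Player `i` has a
winning strategy. -/
def WinRegion (G : GameGraph V) (i : Fin 2) (W : Set (ℕ → V)) : Set V :=
  {v | ∃ σ, WinsFrom G i W σ v}

/-- A vertex occurs infinitely often along a play. -/
def InfOft (ρ : ℕ → V) (v : V) : Prop := ∀ n, ∃ k, n ≤ k ∧ ρ k = v

/-- An edge is taken infinitely often along a play. -/
def EdgeInfOft (ρ : ℕ → V) (e : V × V) : Prop :=
  ∀ n, ∃ k, n ≤ k ∧ ρ k = e.1 ∧ ρ (k + 1) = e.2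

/-- Parity objective: the maximal priority occurring infinitely often is even. -/
def ParityWin (P : V → ℕ) (ρ : ℕ → V) : Prop :=
  ∃ v, InfOft ρ v ∧ Even (P v) ∧ ∀ w, InfOft ρ w → P w ≤ P v

/-- The set of source vertices of a set of edges. -/
def srcSet (H : Set (V × V)) : Set V := {u | ∃ w, (u, w) ∈ H}

/-- Group transition fairness (live group) assumption: for every live group `H`,
if some source vertex of `H` occurs infinitely often, then some edge of `H` is
taken infinitely often. -/
def psiGlive (Hc : Set (Set (V × V))) (ρ : ℕ → V) : Prop :=
  ∀ H ∈ Hc, (∃ u ∈ srcSet H, InfOft ρ u) → ∃ e ∈ H, EdgeInfOft ρ e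


namespace PosWitness

variable {V : Type u}

lemma fin2 (i : Fin 2) : i = 0 ∨ i = 1 := by revert i; decide

lemma ne_of_owner {G : GameGraph V} {x y : V} (hx : G.owner x = 1) (hy : G.owner y = 0) :
    x ≠ y := by
  intro h; rw [h, hy] at hx; exact absurd hx (by decide)

noncomputable def chooseSucc (G : GameGraph V) (x : V) : V := Classical.choose (G.exists_succ x)

lemma chooseSucc_spec (G : GameGraph V) (x : V) : G.E x (chooseSucc G x) :=
  Classical.choose_spec (G.exists_succ x)

noncomputable def bp (g : List V → V → V) (v : V) : ℕ → V
  | 0 => v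
  | k+1 => g (List.ofFn fun j : Fin k => bp g v j.1) (bp g v k)
decreasing_by
  · exact Nat.lt_succ_of_lt j.isLt
  · exact Nat.lt_succ_self k

lemma bp_zero (g : List V → V → V) (v : V) : bp g v 0 = v := by rw [bp]

lemma bp_succ (g : List V → V → V) (v : V) (k : ℕ) :
    bp g v (k+1) = g (List.ofFn fun j : Fin k => bp g v j.1) (bp g v k) := by rw [bp]

lemma ofFn_congr' {ρ ρ' : ℕ → V} {k : ℕ} (h : ∀ j < k, ρ j = ρ' j) :
    (List.ofFn fun j : Fin k => ρ j.1) = List.ofFn fun j : Fin k => ρ' j.1 :=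
  congrArg List.ofFn (funext fun j => h j.1 j.2)

lemma ofFn_snoc (f : ℕ → V) (k : ℕ) :
    (List.ofFn fun j : Fin (k+1) => f j.1) = (List.ofFn fun j : Fin k => f j.1) ++ [f k] := by
  rw [List.ofFn_succ']
  simp [List.concat_eq_append]

lemma dropLast_snoc (l : List V) (x : V) : (l ++ [x]).dropLast = l := by simp

def SameInf (ρ ρ' : ℕ → V) : Prop :=
  (∀ x, InfOft ρ x ↔ InfOft ρ' x) ∧ ∀ e, EdgeInfOft ρ e ↔ EdgeInfOft ρ' e

lemma SameInf.symm {ρ ρ' : ℕ → V} (h : SameInf ρ ρ') : SameInf ρ' ρ :=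
  ⟨fun x => (h.1 x).symm, fun e => (h.2 e).symm⟩

lemma tailEq_sameInf {ρ ρ' : ℕ → V} (N M : ℕ) (h : ∀ j, ρ (N + j) = ρ' (M + j)) :
    SameInf ρ ρ' := by
  constructor
  · intro x
    constructor
    · intro hx n
      obtain ⟨k, hk, hkx⟩ := hx (N + n)
      refine ⟨M + (k - N), by omega, ?_⟩
      rw [← h (k - N)]
      have : N + (k - N) = k := by omega
      rw [this, hkx]
    · intro hx n
      obtain ⟨k, hk, hkx⟩ := hx (M + n)
      refine ⟨N + (k - M), by omega, ?_⟩
      have : M + (k - M) = k := by omega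
      rw [h (k - M), this, hkx]
  · intro e
    constructor
    · intro hx n
      obtain ⟨k, hk, hk1, hk2⟩ := hx (N + n)
      refine ⟨M + (k - N), by omega, ?_, ?_⟩
      · rw [← h (k - N)]
        have : N + (k - N) = k := by omega
        rw [this, hk1]
      · have h2 := h (k - N + 1)
        have e1 : N + (k - N + 1) = k + 1 := by omega
        have e2 : M + (k - N + 1) = M + (k - N) + 1 := by omega
        rw [e1, e2] at h2
        rw [← h2, hk2]
    · intro hx n
      obtain ⟨k, hk, hk1, hk2⟩ := hx (M + n)
      refine ⟨N + (k - M), by omega, ?_, ?_⟩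
      · have : M + (k - M) = k := by omega
        rw [h (k - M), this, hk1]
      · have h2 := h (k - M + 1)
        have e1 : M + (k - M + 1) = k + 1 := by omega
        have e2 : N + (k - M + 1) = N + (k - M) + 1 := by omega
        rw [e2] at h2
        rw [h2, e1, hk2]

variable (Hc : Set (Set (V × V))) (P : V → ℕ)

def WSet : Set (ℕ → V) := {ρ | psiGlive Hc ρ → ParityWin P ρ}

lemma notW_iff {ρ : ℕ → V} : ρ ∉ WSet Hc P ↔ psiGlive Hc ρ ∧ ¬ ParityWin P ρ := by
  simp [WSet, Set.mem_setOf_eq, Classical.not_imp]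

lemma w_mono {ρ ρ' : ℕ → V} (h : SameInf ρ ρ') (hW : ρ ∈ WSet Hc P) : ρ' ∈ WSet Hc P := by
  intro hpsi'
  have hpsi : psiGlive Hc ρ := by
    rintro H hH ⟨x, hxs, hxi⟩
    obtain ⟨e, he, hei⟩ := hpsi' H hH ⟨x, hxs, (h.1 x).1 hxi⟩
    exact ⟨e, he, (h.2 e).2 hei⟩
  obtain ⟨x, hxi, hxe, hxm⟩ := hW hpsi
  exact ⟨x, (h.1 x).1 hxi, hxe, fun w hw => hxm w ((h.1 w).2 hw)⟩

lemma w_combine {ρ ρ1 ρ2 : ℕ → V}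
    (hV1 : ∀ x, InfOft ρ1 x → InfOft ρ x) (hV2 : ∀ x, InfOft ρ2 x → InfOft ρ x)
    (hVs : ∀ x, InfOft ρ x → InfOft ρ1 x ∨ InfOft ρ2 x)
    (hE1 : ∀ e, EdgeInfOft ρ1 e → EdgeInfOft ρ e) (hE2 : ∀ e, EdgeInfOft ρ2 e → EdgeInfOft ρ e)
    (hEs : ∀ e, EdgeInfOft ρ e → EdgeInfOft ρ1 e ∨ EdgeInfOft ρ2 e)
    (h1 : ρ1 ∉ WSet Hc P) (h2 : ρ2 ∉ WSet Hc P) : ρ ∉ WSet Hc P := by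
  rw [notW_iff] at h1 h2 ⊢
  obtain ⟨hg1, hp1⟩ := h1
  obtain ⟨hg2, hp2⟩ := h2
  constructor
  · rintro H hH ⟨x, hxs, hxi⟩
    rcases hVs x hxi with hx | hx
    · obtain ⟨e, he, hei⟩ := hg1 H hH ⟨x, hxs, hx⟩
      exact ⟨e, he, hE1 e hei⟩
    · obtain ⟨e, he, hei⟩ := hg2 H hH ⟨x, hxs, hx⟩
      exact ⟨e, he, hE2 e hei⟩
  · rintro ⟨x, hxi, hxe, hxm⟩
    have key : ∀ (ρ' : ℕ → V), ¬ ParityWin P ρ' → (∀ y, InfOft ρ' y → InfOft ρ y) →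
        InfOft ρ' x → False := by
      intro ρ' hp hsub hx'
      rw [ParityWin] at hp
      push_neg at hp
      obtain ⟨w, hw, hwgt⟩ := hp x hx' hxe
      exact absurd (hxm w (hsub w hw)) (not_le.2 hwgt)
    rcases hVs x hxi with hx | hx
    · exact key ρ1 hp1 hV1 hx
    · exact key ρ2 hp2 hV2 hx

end PosWitness

namespace PosWitness

variable {V : Type u}
variable (Hc : Set (Set (V × V))) (P : V → ℕ)

open scoped Classical

noncomputable def restr (G : GameGraph V) (u : V) (D : V → Prop) (hD : ∃ y, G.E u y ∧ D y) :
    GameGraph V where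
  owner := G.owner
  E := fun x y => if x = u then G.E x y ∧ D y else G.E x y
  exists_succ := by
    intro x
    by_cases hx : x = u
    · subst hx
      refine ⟨hD.choose, ?_⟩
      show if x = x then G.E x hD.choose ∧ D hD.choose else G.E x hD.choose
      rw [if_pos rfl]; exact hD.choose_spec
    · obtain ⟨w, hw⟩ := G.exists_succ x
      refine ⟨w, ?_⟩
      show if x = u then G.E x w ∧ D w else G.E x w
      rw [if_neg hx]; exact hw

lemma restr_owner {G : GameGraph V} {u : V} {D : V → Prop} {hD} :
    (restr G u D hD).owner = G.owner := rfl

lemma restr_E_self {G : GameGraph V} {u : V} {D : V → Prop} {hD} {y : V} :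
    (restr G u D hD).E u y ↔ G.E u y ∧ D y := by
  have h : (restr G u D hD).E u y = if u = u then G.E u y ∧ D y else G.E u y := rfl
  rw [h, if_pos rfl]

lemma restr_E_ne {G : GameGraph V} {u : V} {D : V → Prop} {hD} {x y : V} (hx : x ≠ u) :
    (restr G u D hD).E x y ↔ G.E x y := by
  have h : (restr G u D hD).E x y = if x = u then G.E x y ∧ D y else G.E x y := rfl
  rw [h, if_neg hx]

lemma restr_E_sub {G : GameGraph V} {u : V} {D : V → Prop} {hD} {x y : V}
    (h : (restr G u D hD).E x y) : G.E x y := by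
  by_cases hx : x = u
  · subst hx; exact (restr_E_self.1 h).1
  · exact (restr_E_ne hx).1 h

lemma lift_win0 {G : GameGraph V} {u : V} {D : V → Prop} {hD} (hu : G.owner u = 0) {σ : Strategy V}
    {x : V} (hw : WinsFrom (restr G u D hD) 0 (WSet Hc P) σ x) :
    WinsFrom G 0 (WSet Hc P) σ x := by
  obtain ⟨hval, hpl⟩ := hw
  refine ⟨fun h v hv => restr_E_sub (hval h v hv), fun ρ hp hc h0 => hpl ρ ?_ hc h0⟩
  intro k
  by_cases hk : ρ k = u
  · have h1 : ρ (k+1) = σ (List.ofFn fun j : Fin k => ρ j.1) (ρ k) := hc k (by rw [hk]; exact hu)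
    rw [h1]
    exact hval _ _ (by rw [hk]; exact hu)
  · exact (restr_E_ne hk).2 (hp k)

lemma base_dich {G : GameGraph V}
    (hb : ∀ x y y', G.owner x = 0 → G.E x y → G.E x y' → y = y') (v : V) :
    (∃ σ, Positional σ ∧ WinsFrom G 0 (WSet Hc P) σ v) ∨
      (∃ τ, WinsFrom G 1 (WSet Hc P)ᶜ τ v) := by
  classical
  set π : Strategy V := fun _ x => chooseSucc G x with hπ
  by_cases hw : ∀ ρ, IsPlay G ρ → Compliant G 0 π ρ → ρ 0 = v → ρ ∈ WSet Hc P
  · exact Or.inl ⟨π, fun _ _ _ => rfl, ⟨fun h x _ => chooseSucc_spec G x, hw⟩⟩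
  · push_neg at hw
    obtain ⟨ρ, hp, hc, h0, hbad⟩ := hw
    refine Or.inr ⟨fun h x => if G.E x (ρ (h.length + 1)) then ρ (h.length + 1)
      else chooseSucc G x, ?_, ?_⟩
    · intro h x _
      dsimp only
      split_ifs with h'
      exacts [h', chooseSucc_spec G x]
    · intro ρ' hp' hc' h0'
      have key : ∀ k, ρ' k = ρ k := by
        intro k
        induction k with
        | zero => rw [h0, h0']
        | succ k ih =>
          rcases fin2 (G.owner (ρ' k)) with h1 | h1
          · have h2 : G.E (ρ' k) (ρ (k+1)) := by rw [ih]; exact hp k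
            exact hb (ρ' k) _ _ h1 (hp' k) h2
          · have h3 := hc' k h1
            rw [h3]
            have hlen : (List.ofFn fun j : Fin k => ρ' j.1).length = k := by simp
            dsimp only
            rw [hlen, if_pos (by rw [ih]; exact hp k)]
      have : ρ' = ρ := funext key
      rw [this]
      exact hbad

lemma avoid_win {G : GameGraph V} {u : V} {D : V → Prop} {hD} (hu : G.owner u = 0)
    {π τ' : Strategy V} {v : V}
    (hπp : Positional π) (hπw : WinsFrom (restr G u D hD) 0 (WSet Hc P) π u)
    (hτ : WinsFrom (restr G u D hD) 1 (WSet Hc P)ᶜ τ' v) :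
    WinsFrom G 1 (WSet Hc P)ᶜ τ' v := by
  classical
  set R := restr G u D hD with hR
  -- claim 1 : no R-play compliant with τ' from v ever visits u
  have claim1 : ∀ ρ', IsPlay R ρ' → Compliant R 1 τ' ρ' → ρ' 0 = v → ∀ k, ρ' k ≠ u := by
    intro ρ' hp' hc' h0' k hk
    set g : List V → V → V := fun h x =>
      if h.length < k then ρ' (h.length + 1)
      else if G.owner x = 0 then π h x else τ' h x with hg
    set ρ'' : ℕ → V := bp g v with hρ''
    have heq : ∀ j ≤ k, ρ'' j = ρ' j := by
      intro j hj
      induction j with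
      | zero => rw [hρ'', bp_zero, h0']
      | succ j ih =>
        rw [hρ'', bp_succ, ← hρ'', hg]
        dsimp only
        rw [List.length_ofFn]
        rw [if_pos (by omega)]
    have hply : IsPlay R ρ'' := by
      intro j
      by_cases hj : j < k
      · rw [heq j (by omega), heq (j+1) (by omega)]
        exact hp' j
      · rw [hρ'', bp_succ, ← hρ'', hg]
        dsimp only
        rw [List.length_ofFn, if_neg hj]
        rcases fin2 (G.owner (ρ'' j)) with h1 | h1
        · rw [if_pos h1]
          exact hπw.1 _ _ h1
        · rw [if_neg (by rw [h1]; decide)]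
          exact hτ.1 _ _ h1
    have hcpl : Compliant R 1 τ' ρ'' := by
      intro j h1
      have h1' : G.owner (ρ'' j) = 1 := h1
      by_cases hj : j < k
      · have e1 : ρ'' (j+1) = ρ' (j+1) := heq (j+1) (by omega)
        have e2 : ρ'' j = ρ' j := heq j (by omega)
        rw [e1, hc' j (by rw [← e2]; exact h1), e2,
          ofFn_congr' (fun i hi => (heq i (by omega)).symm)]
      · rw [hρ'', bp_succ, ← hρ'', hg]
        dsimp only
        rw [List.length_ofFn, if_neg hj, if_neg (by rw [h1']; decide)]
    have hnotW : ρ'' ∉ WSet Hc P := hτ.2 ρ'' hply hcpl (by rw [hρ'', bp_zero])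
    set tl : ℕ → V := fun j => ρ'' (k + j) with htl
    have htlp : IsPlay R tl := by
      intro j
      have h2 : k + j + 1 = k + (j + 1) := by omega
      have h3 := hply (k + j)
      rw [h2] at h3
      exact h3
    have htlc : Compliant R 0 π tl := by
      intro j h1
      have h1' : G.owner (ρ'' (k + j)) = 0 := h1
      have e0 : tl (j+1) = ρ'' (k + j + 1) := by
        show ρ'' (k + (j + 1)) = ρ'' (k + j + 1)
        rw [Nat.add_assoc]
      rw [e0, hρ'', bp_succ, ← hρ'', hg]
      dsimp only
      rw [List.length_ofFn, if_neg (by omega), if_pos h1']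
      exact hπp _ _ _
    have htl0 : tl 0 = u := by
      have h2 : ρ'' k = u := (heq k le_rfl).trans hk
      show ρ'' (k + 0) = u
      rw [Nat.add_zero]
      exact h2
    have htlW : tl ∈ WSet Hc P := hπw.2 tl htlp htlc htl0
    have hsi : SameInf ρ'' tl := tailEq_sameInf k 0 (fun j => by
      show ρ'' (k + j) = ρ'' (k + (0 + j))
      rw [Nat.zero_add])
    exact hnotW (w_mono Hc P (hsi.symm) htlW)
  -- main
  refine ⟨?_, ?_⟩
  · intro h x hx
    have h1 : R.E x (τ' h x) := hτ.1 h x hx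
    exact restr_E_sub h1
  · intro ρ hp hc h0
    have noU : ∀ k, ρ k ≠ u := by
      intro k
      induction k using Nat.strong_induction_on with
      | _ k IH =>
        intro hk
        set g : List V → V → V := fun h x =>
          if h.length < k then ρ (h.length + 1)
          else if G.owner x = 1 then τ' h x else chooseSucc R x with hg
        set ρ''' : ℕ → V := bp g v with hρ'''
        have heq : ∀ j ≤ k, ρ''' j = ρ j := by
          intro j hj
          induction j with
          | zero => rw [hρ''', bp_zero, h0]
          | succ j ih =>
            rw [hρ''', bp_succ, ← hρ''', hg]
            dsimp only
            rw [List.length_ofFn, if_pos (by omega)]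
        have hply : IsPlay R ρ''' := by
          intro j
          by_cases hj : j < k
          · rw [heq j (by omega), heq (j+1) (by omega)]
            have hne : ρ j ≠ u := IH j (by omega)
            exact (restr_E_ne hne).2 (hp j)
          · rw [hρ''', bp_succ, ← hρ''', hg]
            dsimp only
            rw [List.length_ofFn, if_neg hj]
            rcases fin2 (G.owner (ρ''' j)) with h1 | h1
            · rw [if_neg (by rw [h1]; decide)]
              exact chooseSucc_spec R _
            · rw [if_pos h1]
              exact hτ.1 _ _ h1
        have hcpl : Compliant R 1 τ' ρ''' := by
          intro j h1
          have h1' : G.owner (ρ''' j) = 1 := h1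
          by_cases hj : j < k
          · have e1 : ρ''' (j+1) = ρ (j+1) := heq (j+1) (by omega)
            have e2 : ρ''' j = ρ j := heq j (by omega)
            rw [e1, hc j (by rw [← e2]; exact h1), e2,
              ofFn_congr' (fun i hi => (heq i (by omega)).symm)]
          · rw [hρ''', bp_succ, ← hρ''', hg]
            dsimp only
            rw [List.length_ofFn, if_neg hj, if_pos h1']
        exact claim1 ρ''' hply hcpl (by rw [hρ''', bp_zero]) k (by rw [heq k le_rfl]; exact hk)
    have hpR : IsPlay R ρ := fun k => (restr_E_ne (noU k)).2 (hp k)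
    exact hτ.2 ρ hpR hc h0

end PosWitness

namespace PosWitness

variable {V : Type u}

open scoped Classical

noncomputable def sideF (u w0 : V) (ρ : ℕ → V) : ℕ → Bool
  | 0 => true
  | k+1 => if ρ k = u then (if ρ (k+1) = w0 then true else false) else sideF u w0 ρ k

lemma sideF_zero (u w0 : V) (ρ : ℕ → V) : sideF u w0 ρ 0 = true := rfl

lemma sideF_succ_ne {u w0 : V} {ρ : ℕ → V} {k : ℕ} (h : ρ k ≠ u) :
    sideF u w0 ρ (k+1) = sideF u w0 ρ k := by
  rw [sideF, if_neg h]

lemma sideF_succ_u_pos {u w0 : V} {ρ : ℕ → V} {k : ℕ} (h : ρ k = u) (h2 : ρ (k+1) = w0) :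
    sideF u w0 ρ (k+1) = true := by
  rw [sideF, if_pos h, if_pos h2]

lemma sideF_succ_u_neg {u w0 : V} {ρ : ℕ → V} {k : ℕ} (h : ρ k = u) (h2 : ρ (k+1) ≠ w0) :
    sideF u w0 ρ (k+1) = false := by
  rw [sideF, if_pos h, if_neg h2]

lemma switch_TF {u w0 : V} {ρ : ℕ → V} {k : ℕ} (h1 : sideF u w0 ρ k = true)
    (h2 : sideF u w0 ρ (k+1) = false) : ρ k = u ∧ ρ (k+1) ≠ w0 := by
  by_cases hk : ρ k = u
  · refine ⟨hk, fun hw => ?_⟩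
    rw [sideF_succ_u_pos hk hw] at h2
    simp at h2
  · rw [sideF_succ_ne hk, h1] at h2
    simp at h2

lemma switch_FT {u w0 : V} {ρ : ℕ → V} {k : ℕ} (h1 : sideF u w0 ρ k = false)
    (h2 : sideF u w0 ρ (k+1) = true) : ρ k = u ∧ ρ (k+1) = w0 := by
  by_cases hk : ρ k = u
  · refine ⟨hk, ?_⟩
    by_contra hw
    rw [sideF_succ_u_neg hk hw] at h2
    simp at h2
  · rw [sideF_succ_ne hk, h1] at h2
    simp at h2

lemma stay_u_T {u w0 : V} {ρ : ℕ → V} {k : ℕ} (h : ρ k = u)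
    (h2 : sideF u w0 ρ (k+1) = true) : ρ (k+1) = w0 := by
  by_contra hw
  rw [sideF_succ_u_neg h hw] at h2
  simp at h2

lemma stay_u_F {u w0 : V} {ρ : ℕ → V} {k : ℕ} (h : ρ k = u)
    (h2 : sideF u w0 ρ (k+1) = false) : ρ (k+1) ≠ w0 := by
  intro hw
  rw [sideF_succ_u_pos h hw] at h2
  simp at h2

noncomputable def LAF (u w0 : V) (ρ : ℕ → V) : ℕ → List V
  | 0 => [ρ 0]
  | k+1 => if sideF u w0 ρ (k+1) then LAF u w0 ρ k ++ [ρ (k+1)] else LAF u w0 ρ k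

noncomputable def LBF (u w0 : V) (ρ : ℕ → V) : ℕ → List V
  | 0 => []
  | k+1 => if sideF u w0 ρ (k+1) then LBF u w0 ρ k
      else (if (LBF u w0 ρ k).isEmpty then [u] else LBF u w0 ρ k) ++ [ρ (k+1)]

noncomputable def procStep (u w0 : V) (st : V × Bool × List V × List V) (y : V) :
    V × Bool × List V × List V :=
  if st.1 = u then
    (if y = w0 then (y, true, st.2.2.1 ++ [y], st.2.2.2)
     else (y, false, st.2.2.1, (if st.2.2.2.isEmpty then [u] else st.2.2.2) ++ [y]))
  else (y, st.2.1, if st.2.1 then st.2.2.1 ++ [y] else st.2.2.1,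
        if st.2.1 then st.2.2.2 else (if st.2.2.2.isEmpty then [u] else st.2.2.2) ++ [y])

noncomputable def stOf (u w0 : V) : List V → V × Bool × List V × List V
  | [] => (u, true, [], [])
  | z :: t => t.foldl (procStep u w0) (z, true, [z], [])

lemma stOf_snoc (u w0 : V) {l : List V} (hl : l ≠ []) (y : V) :
    stOf u w0 (l ++ [y]) = procStep u w0 (stOf u w0 l) y := by
  cases l with
  | nil => exact absurd rfl hl
  | cons z t => simp [stOf, List.cons_append, List.foldl_append]

lemma ofFn_ne_nil (f : ℕ → V) (k : ℕ) : (List.ofFn fun j : Fin (k+1) => f j.1) ≠ [] := by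
  intro h
  have := congrArg List.length h
  simp at this

lemma stOf_spec (u w0 : V) (ρ : ℕ → V) :
    ∀ k, stOf u w0 (List.ofFn fun j : Fin (k+1) => ρ j.1)
      = (ρ k, sideF u w0 ρ k, LAF u w0 ρ k, LBF u w0 ρ k) := by
  intro k
  induction k with
  | zero =>
    show stOf u w0 [ρ 0] = _
    simp [stOf, LAF, LBF, sideF]
  | succ k ih =>
    rw [ofFn_snoc ρ (k+1), stOf_snoc u w0 (ofFn_ne_nil ρ k) (ρ (k+1)), ih]
    by_cases h1 : ρ k = u
    · by_cases h2 : ρ (k+1) = w0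
      · rw [procStep]
        dsimp only
        rw [if_pos h1, if_pos h2]
        have hs := sideF_succ_u_pos (w0 := w0) h1 h2
        rw [LAF, LBF, hs]
        try simp
      · rw [procStep]
        dsimp only
        rw [if_pos h1, if_neg h2]
        have hs := sideF_succ_u_neg (w0 := w0) h1 h2
        rw [LAF, LBF, hs]
        try simp
    · rw [procStep]
      dsimp only
      rw [if_neg h1]
      have hs := sideF_succ_ne (w0 := w0) h1
      cases hss : sideF u w0 ρ k with
      | true =>
        rw [hss] at hs
        rw [LAF, LBF, hs]
        try simp
      | false =>
        rw [hss] at hs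
        rw [LAF, LBF, hs]
        try simp

noncomputable def comb (u w0 : V) (τA τB : Strategy V) : Strategy V := fun h x =>
  if (stOf u w0 (h ++ [x])).2.1 then τA (stOf u w0 (h ++ [x])).2.2.1.dropLast x
  else τB (stOf u w0 (h ++ [x])).2.2.2.dropLast x

lemma comb_eval (u w0 : V) (τA τB : Strategy V) (ρ : ℕ → V) (k : ℕ) :
    comb u w0 τA τB (List.ofFn fun j : Fin k => ρ j.1) (ρ k)
      = if sideF u w0 ρ k then τA (LAF u w0 ρ k).dropLast (ρ k)
        else τB (LBF u w0 ρ k).dropLast (ρ k) := by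
  rw [comb, ← ofFn_snoc, stOf_spec]

end PosWitness

namespace PosWitness

variable {V : Type u}

open scoped Classical

section NTH

variable {p : ℕ → Prop} [DecidablePred p]

lemma nth_between (hp : (setOf p).Infinite) {n k : ℕ} (h1 : Nat.nth p n < k)
    (h2 : k < Nat.nth p (n+1)) : ¬ p k := by
  intro hk
  have h3 := Nat.nth_count hk
  have h4 : n < Nat.count p k := (Nat.nth_lt_nth hp).1 (by rw [h3]; exact h1)
  have h5 : Nat.count p k < n + 1 := (Nat.nth_lt_nth hp).1 (by rw [h3]; exact h2)
  omega

lemma nth_succ_eq (hp : (setOf p).Infinite) {n : ℕ} (h : p (Nat.nth p n + 1)) :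
    Nat.nth p (n+1) = Nat.nth p n + 1 := by
  have hlt : Nat.nth p n < Nat.nth p (n+1) := (Nat.nth_lt_nth hp).2 (Nat.lt_succ_self n)
  rcases Nat.lt_or_ge (Nat.nth p n + 1) (Nat.nth p (n+1)) with h1 | h1
  · exact absurd h (nth_between hp (Nat.lt_succ_self _) h1)
  · omega

lemma nth_zero_add_le (hp : (setOf p).Infinite) (n : ℕ) : Nat.nth p 0 + n ≤ Nat.nth p n := by
  induction n with
  | zero => simp
  | succ n ih =>
    have h := (Nat.nth_lt_nth hp).2 (show n < n + 1 by omega)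
    omega

lemma lt_nth_zero (hp : (setOf p).Infinite) {k : ℕ} (h : k < Nat.nth p 0) : ¬ p k := by
  intro hk
  have h3 := Nat.nth_count hk
  have h4 : Nat.nth p 0 ≤ Nat.nth p (Nat.count p k) :=
    (Nat.nth_strictMono hp).monotone (Nat.zero_le _)
  omega

end NTH

def isA (u w0 : V) (ρ : ℕ → V) (k : ℕ) : Prop := sideF u w0 ρ k = true

def isB (u w0 : V) (ρ : ℕ → V) (k : ℕ) : Prop := sideF u w0 ρ k = false

noncomputable instance {u w0 : V} {ρ : ℕ → V} : DecidablePred (isA u w0 ρ) := fun k => by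
  unfold isA; infer_instance

noncomputable instance {u w0 : V} {ρ : ℕ → V} : DecidablePred (isB u w0 ρ) := fun k => by
  unfold isB; infer_instance

noncomputable def aIdx (u w0 : V) (ρ : ℕ → V) (n : ℕ) : ℕ := Nat.nth (isA u w0 ρ) n

noncomputable def thA (u w0 : V) (ρ : ℕ → V) (n : ℕ) : V := ρ (aIdx u w0 ρ n)

noncomputable def bIdx (u w0 : V) (ρ : ℕ → V) (n : ℕ) : ℕ := Nat.nth (isB u w0 ρ) n

noncomputable def thB (u w0 : V) (ρ : ℕ → V) : ℕ → V
  | 0 => u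
  | n+1 => ρ (bIdx u w0 ρ n)

lemma thB_zero (u w0 : V) (ρ : ℕ → V) : thB u w0 ρ 0 = u := rfl

lemma thB_succ (u w0 : V) (ρ : ℕ → V) (n : ℕ) : thB u w0 ρ (n+1) = ρ (bIdx u w0 ρ n) := rfl

section ThreadA

variable {G : GameGraph V} {u w0 : V} {ρ : ℕ → V}

lemma isA_zero : isA u w0 ρ 0 := sideF_zero u w0 ρ

lemma aIdx_zero : aIdx u w0 ρ 0 = 0 := Nat.nth_zero_of_zero isA_zero

lemma isA_aIdx (hA : (setOf (isA u w0 ρ)).Infinite) (n : ℕ) :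
    sideF u w0 ρ (aIdx u w0 ρ n) = true :=
  Nat.nth_mem_of_infinite hA n

lemma aIdx_lt (hA : (setOf (isA u w0 ρ)).Infinite) {m n : ℕ} (h : m < n) :
    aIdx u w0 ρ m < aIdx u w0 ρ n := (Nat.nth_lt_nth hA).2 h

lemma aIdx_le_self (hA : (setOf (isA u w0 ρ)).Infinite) (n : ℕ) : n ≤ aIdx u w0 ρ n :=
  (Nat.nth_strictMono hA).le_apply

lemma aIdx_between (hA : (setOf (isA u w0 ρ)).Infinite) {n k : ℕ}
    (h1 : aIdx u w0 ρ n < k) (h2 : k < aIdx u w0 ρ (n+1)) : sideF u w0 ρ k = false := by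
  have hni : ¬ isA u w0 ρ k := nth_between hA h1 h2
  simpa [isA] using hni

lemma aIdx_count (hA : (setOf (isA u w0 ρ)).Infinite) (n : ℕ) :
    Nat.count (isA u w0 ρ) (aIdx u w0 ρ n) = n := Nat.count_nth_of_infinite hA n

lemma aStep (hA : (setOf (isA u w0 ρ)).Infinite) (n : ℕ) :
    aIdx u w0 ρ (n+1) = aIdx u w0 ρ n + 1 ∨
    (ρ (aIdx u w0 ρ n) = u ∧ ρ (aIdx u w0 ρ (n+1)) = w0 ∧ ρ (aIdx u w0 ρ (n+1) - 1) = u ∧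
      aIdx u w0 ρ n + 1 < aIdx u w0 ρ (n+1)) := by
  have hlt : aIdx u w0 ρ n < aIdx u w0 ρ (n+1) := aIdx_lt hA (Nat.lt_succ_self n)
  by_cases hadj : aIdx u w0 ρ (n+1) = aIdx u w0 ρ n + 1
  · exact Or.inl hadj
  · right
    have hgap : aIdx u w0 ρ n + 1 < aIdx u w0 ρ (n+1) := by omega
    have h1 : sideF u w0 ρ (aIdx u w0 ρ n) = true := isA_aIdx hA n
    have h2 : sideF u w0 ρ (aIdx u w0 ρ n + 1) = false :=
      aIdx_between hA (Nat.lt_succ_self _) hgap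
    obtain ⟨hu1, -⟩ := switch_TF h1 h2
    have h3 : sideF u w0 ρ (aIdx u w0 ρ (n+1)) = true := isA_aIdx hA (n+1)
    have h4 : sideF u w0 ρ (aIdx u w0 ρ (n+1) - 1) = false :=
      aIdx_between (n := n) hA (by omega) (by omega)
    have h5 : aIdx u w0 ρ (n+1) - 1 + 1 = aIdx u w0 ρ (n+1) := by omega
    have h6 := switch_FT h4 (by rw [h5]; exact h3)
    rw [h5] at h6
    exact ⟨hu1, h6.2, h6.1, hgap⟩

lemma thA_zero {v : V} (h0 : ρ 0 = v) : thA u w0 ρ 0 = v := by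
  unfold thA; rw [aIdx_zero]; exact h0

lemma thA_isPlay (hA : (setOf (isA u w0 ρ)).Infinite) (hplay : IsPlay G ρ)
    (hEuw0 : G.E u w0) {hDA} :
    IsPlay (restr G u (fun z => z = w0) hDA) (thA u w0 ρ) := by
  intro n
  rcases aStep hA n with hadj | ⟨hu1, hw1, -, -⟩
  · show (restr G u (fun z => z = w0) hDA).E (ρ (aIdx u w0 ρ n)) (ρ (aIdx u w0 ρ (n+1)))
    rw [hadj]
    by_cases hx : ρ (aIdx u w0 ρ n) = u
    · have hs : sideF u w0 ρ (aIdx u w0 ρ n + 1) = true := by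
        rw [← hadj]; exact isA_aIdx hA (n+1)
      have hw := stay_u_T hx hs
      have hpl : G.E (ρ (aIdx u w0 ρ n)) (ρ (aIdx u w0 ρ n + 1)) := hplay _
      rw [hx] at hpl
      rw [hx, restr_E_self]
      exact ⟨hpl, hw⟩
    · rw [restr_E_ne hx]
      exact hplay _
  · show (restr G u (fun z => z = w0) hDA).E (ρ (aIdx u w0 ρ n)) (ρ (aIdx u w0 ρ (n+1)))
    rw [hu1, hw1, restr_E_self]
    exact ⟨hEuw0, rfl⟩

lemma LAF_spec : ∀ k, LAF u w0 ρ k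
    = List.ofFn fun j : Fin (Nat.count (isA u w0 ρ) (k+1)) => thA u w0 ρ j.1 := by
  intro k
  induction k with
  | zero =>
    have hc : Nat.count (isA u w0 ρ) 1 = 1 := by
      rw [Nat.count_succ, Nat.count_zero, if_pos isA_zero]
    rw [LAF, hc]
    simp [List.ofFn_succ, thA, aIdx_zero]
  | succ k ih =>
    by_cases hs : sideF u w0 ρ (k+1) = true
    · have hiA : isA u w0 ρ (k+1) := hs
      have hc : Nat.count (isA u w0 ρ) (k+2) = Nat.count (isA u w0 ρ) (k+1) + 1 := by
        rw [Nat.count_succ, if_pos hiA]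
      have hnth : aIdx u w0 ρ (Nat.count (isA u w0 ρ) (k+1)) = k + 1 := Nat.nth_count hiA
      rw [LAF, if_pos hs, hc, ofFn_snoc (fun j => thA u w0 ρ j) _, ih]
      have he : thA u w0 ρ (Nat.count (isA u w0 ρ) (k+1)) = ρ (k+1) := by
        unfold thA; rw [hnth]
      rw [he]
    · have hiA : ¬ isA u w0 ρ (k+1) := hs
      have hc : Nat.count (isA u w0 ρ) (k+2) = Nat.count (isA u w0 ρ) (k+1) := by
        rw [Nat.count_succ, if_neg hiA, Nat.add_zero]
      rw [LAF, if_neg hs, hc, ih]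

lemma LAF_dropLast (hA : (setOf (isA u w0 ρ)).Infinite) (n : ℕ) :
    (LAF u w0 ρ (aIdx u w0 ρ n)).dropLast = List.ofFn fun j : Fin n => thA u w0 ρ j.1 := by
  have hc : Nat.count (isA u w0 ρ) (aIdx u w0 ρ n + 1) = n + 1 := by
    rw [Nat.count_succ, aIdx_count hA, if_pos (show isA u w0 ρ (aIdx u w0 ρ n) from isA_aIdx hA n)]
  rw [LAF_spec, hc, ofFn_snoc (fun j => thA u w0 ρ j) n]
  simp

lemma thA_compliant (hA : (setOf (isA u w0 ρ)).Infinite) (hu : G.owner u = 0)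
    {τA τB : Strategy V} (hc : Compliant G 1 (comb u w0 τA τB) ρ) {hDA} :
    Compliant (restr G u (fun z => z = w0) hDA) 1 τA (thA u w0 ρ) := by
  intro n h1
  have h1' : G.owner (ρ (aIdx u w0 ρ n)) = 1 := h1
  have hne : ρ (aIdx u w0 ρ n) ≠ u := ne_of_owner h1' hu
  have hs : sideF u w0 ρ (aIdx u w0 ρ n + 1) = true := by
    rw [sideF_succ_ne hne]; exact isA_aIdx hA n
  have hadj : aIdx u w0 ρ (n+1) = aIdx u w0 ρ n + 1 :=
    nth_succ_eq hA (show isA u w0 ρ (aIdx u w0 ρ n + 1) from hs)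
  have hck := hc (aIdx u w0 ρ n) h1'
  rw [comb_eval, if_pos (isA_aIdx hA n)] at hck
  show ρ (aIdx u w0 ρ (n+1)) = τA (List.ofFn fun j : Fin n => thA u w0 ρ j.1) (ρ (aIdx u w0 ρ n))
  rw [hadj, hck, LAF_dropLast hA n]

lemma thA_edge_occ (hA : (setOf (isA u w0 ρ)).Infinite) (n : ℕ) :
    ∃ k, n ≤ k ∧ ρ k = thA u w0 ρ n ∧ ρ (k+1) = thA u w0 ρ (n+1) := by
  rcases aStep hA n with hadj | ⟨hu1, -, hj1, hgap⟩
  · refine ⟨aIdx u w0 ρ n, aIdx_le_self hA n, rfl, ?_⟩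
    unfold thA; rw [hadj]
  · have hle : n + 1 ≤ aIdx u w0 ρ (n+1) := aIdx_le_self hA (n+1)
    refine ⟨aIdx u w0 ρ (n+1) - 1, by omega, ?_, ?_⟩
    · rw [hj1]; unfold thA; rw [hu1]
    · have h5 : aIdx u w0 ρ (n+1) - 1 + 1 = aIdx u w0 ρ (n+1) := by omega
      rw [h5]; rfl

lemma edge_to_thA (hA : (setOf (isA u w0 ρ)).Infinite) {k : ℕ}
    (hs : sideF u w0 ρ (k+1) = true) :
    ∃ m, aIdx u w0 ρ (m+1) = k + 1 ∧ thA u w0 ρ m = ρ k ∧ thA u w0 ρ (m+1) = ρ (k+1) := by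
  have hiA : isA u w0 ρ (k+1) := hs
  have hnth : aIdx u w0 ρ (Nat.count (isA u w0 ρ) (k+1)) = k + 1 := Nat.nth_count hiA
  have hcpos : Nat.count (isA u w0 ρ) (k+1) ≠ 0 := by
    intro h0
    rw [h0, aIdx_zero] at hnth
    omega
  obtain ⟨m, hm⟩ : ∃ m, Nat.count (isA u w0 ρ) (k+1) = m + 1 :=
    ⟨Nat.count (isA u w0 ρ) (k+1) - 1, by omega⟩
  rw [hm] at hnth
  refine ⟨m, hnth, ?_, by unfold thA; rw [hnth]⟩
  have h1 : aIdx u w0 ρ m < k + 1 := by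
    rw [← hnth]; exact aIdx_lt hA (Nat.lt_succ_self m)
  by_cases hsk : sideF u w0 ρ k = true
  · have h2 : aIdx u w0 ρ m = k := by
      by_contra hne2
      have h3 : aIdx u w0 ρ m < k := by omega
      have h4 : sideF u w0 ρ k = false := aIdx_between hA h3 (by omega)
      rw [hsk] at h4
      simp at h4
    unfold thA; rw [h2]
  · have hskf : sideF u w0 ρ k = false := by simpa using hsk
    have hswk := switch_FT hskf hs
    have h2 : aIdx u w0 ρ m < k := by
      rcases Nat.lt_or_ge (aIdx u w0 ρ m) k with h | h
      · exact h
      · exfalso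
        have he : aIdx u w0 ρ m = k := by omega
        exact hsk (by rw [← he]; exact isA_aIdx hA m)
    have h4 : sideF u w0 ρ (aIdx u w0 ρ m + 1) = false :=
      aIdx_between hA (Nat.lt_succ_self _) (by omega)
    have h5 := switch_TF (isA_aIdx hA m) h4
    unfold thA
    rw [h5.1, hswk.1]

lemma vert_to_thA {k : ℕ} (hs : sideF u w0 ρ k = true) : ∃ m, aIdx u w0 ρ m = k :=
  ⟨Nat.count (isA u w0 ρ) k, Nat.nth_count hs⟩

end ThreadA

end PosWitness

namespace PosWitness

variable {V : Type u}

open scoped Classical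

section ThreadB

variable {G : GameGraph V} {u w0 : V} {ρ : ℕ → V}

lemma isB_not_zero : ¬ isB u w0 ρ 0 := by
  unfold isB
  rw [sideF_zero]
  simp

lemma isB_bIdx (hB : (setOf (isB u w0 ρ)).Infinite) (n : ℕ) :
    sideF u w0 ρ (bIdx u w0 ρ n) = false :=
  Nat.nth_mem_of_infinite hB n

lemma bIdx_lt (hB : (setOf (isB u w0 ρ)).Infinite) {m n : ℕ} (h : m < n) :
    bIdx u w0 ρ m < bIdx u w0 ρ n := (Nat.nth_lt_nth hB).2 h

lemma bIdx_le_self (hB : (setOf (isB u w0 ρ)).Infinite) (n : ℕ) : n ≤ bIdx u w0 ρ n :=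
  (Nat.nth_strictMono hB).le_apply

lemma bIdx_between (hB : (setOf (isB u w0 ρ)).Infinite) {n k : ℕ}
    (h1 : bIdx u w0 ρ n < k) (h2 : k < bIdx u w0 ρ (n+1)) : sideF u w0 ρ k = true := by
  have hni : ¬ isB u w0 ρ k := nth_between hB h1 h2
  simpa [isB] using hni

lemma bIdx_count (hB : (setOf (isB u w0 ρ)).Infinite) (n : ℕ) :
    Nat.count (isB u w0 ρ) (bIdx u w0 ρ n) = n := Nat.count_nth_of_infinite hB n

lemma bIdx_pos (hB : (setOf (isB u w0 ρ)).Infinite) : 1 ≤ bIdx u w0 ρ 0 := by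
  rcases Nat.eq_zero_or_pos (bIdx u w0 ρ 0) with h | h
  · exact absurd (show isB u w0 ρ 0 from h ▸ isB_bIdx hB 0) isB_not_zero
  · exact h

lemma b0_facts (hB : (setOf (isB u w0 ρ)).Infinite) :
    ρ (bIdx u w0 ρ 0 - 1) = u ∧ ρ (bIdx u w0 ρ 0) ≠ w0 := by
  have hmem : sideF u w0 ρ (bIdx u w0 ρ 0) = false := isB_bIdx hB 0
  have hpos : 1 ≤ bIdx u w0 ρ 0 := bIdx_pos hB
  have hprev : sideF u w0 ρ (bIdx u w0 ρ 0 - 1) = true := by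
    have hni : ¬ isB u w0 ρ (bIdx u w0 ρ 0 - 1) :=
      lt_nth_zero hB (show bIdx u w0 ρ 0 - 1 < bIdx u w0 ρ 0 by omega)
    simpa [isB] using hni
  have h5 : bIdx u w0 ρ 0 - 1 + 1 = bIdx u w0 ρ 0 := by omega
  have h6 := switch_TF hprev (by rw [h5]; exact hmem)
  rw [h5] at h6
  exact h6

lemma bStep (hB : (setOf (isB u w0 ρ)).Infinite) (n : ℕ) :
    bIdx u w0 ρ (n+1) = bIdx u w0 ρ n + 1 ∨
    (ρ (bIdx u w0 ρ n) = u ∧ ρ (bIdx u w0 ρ (n+1) - 1) = u ∧ ρ (bIdx u w0 ρ (n+1)) ≠ w0 ∧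
      bIdx u w0 ρ n + 1 < bIdx u w0 ρ (n+1)) := by
  have hlt : bIdx u w0 ρ n < bIdx u w0 ρ (n+1) := bIdx_lt hB (Nat.lt_succ_self n)
  by_cases hadj : bIdx u w0 ρ (n+1) = bIdx u w0 ρ n + 1
  · exact Or.inl hadj
  · right
    have hgap : bIdx u w0 ρ n + 1 < bIdx u w0 ρ (n+1) := by omega
    have h1 : sideF u w0 ρ (bIdx u w0 ρ n) = false := isB_bIdx hB n
    have h2 : sideF u w0 ρ (bIdx u w0 ρ n + 1) = true :=
      bIdx_between (n := n) hB (Nat.lt_succ_self _) hgap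
    obtain ⟨hu1, -⟩ := switch_FT h1 h2
    have h3 : sideF u w0 ρ (bIdx u w0 ρ (n+1)) = false := isB_bIdx hB (n+1)
    have h4 : sideF u w0 ρ (bIdx u w0 ρ (n+1) - 1) = true :=
      bIdx_between (n := n) hB (by omega) (by omega)
    have h5 : bIdx u w0 ρ (n+1) - 1 + 1 = bIdx u w0 ρ (n+1) := by omega
    have h6 := switch_TF h4 (by rw [h5]; exact h3)
    rw [h5] at h6
    exact ⟨hu1, h6.1, h6.2, hgap⟩

lemma thB_isPlay (hB : (setOf (isB u w0 ρ)).Infinite) (hplay : IsPlay G ρ) {hDB} :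
    IsPlay (restr G u (fun z => z ≠ w0) hDB) (thB u w0 ρ) := by
  intro n
  match n with
  | 0 =>
    obtain ⟨hprev, hne⟩ := b0_facts hB
    have h5 : bIdx u w0 ρ 0 - 1 + 1 = bIdx u w0 ρ 0 := by
      have := bIdx_pos hB; omega
    have hpl : G.E (ρ (bIdx u w0 ρ 0 - 1)) (ρ (bIdx u w0 ρ 0 - 1 + 1)) := hplay _
    rw [h5, hprev] at hpl
    show (restr G u (fun z => z ≠ w0) hDB).E u (ρ (bIdx u w0 ρ 0))
    rw [restr_E_self]
    exact ⟨hpl, hne⟩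
  | n+1 =>
    show (restr G u (fun z => z ≠ w0) hDB).E (ρ (bIdx u w0 ρ n)) (ρ (bIdx u w0 ρ (n+1)))
    rcases bStep hB n with hadj | ⟨hu1, hj1, hne1, hgap⟩
    · rw [hadj]
      by_cases hx : ρ (bIdx u w0 ρ n) = u
      · have hs : sideF u w0 ρ (bIdx u w0 ρ n + 1) = false := by
          rw [← hadj]; exact isB_bIdx hB (n+1)
        have hw := stay_u_F hx hs
        have hpl : G.E (ρ (bIdx u w0 ρ n)) (ρ (bIdx u w0 ρ n + 1)) := hplay _
        rw [hx] at hpl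
        rw [hx, restr_E_self]
        exact ⟨hpl, hw⟩
      · rw [restr_E_ne hx]
        exact hplay _
    · have h5 : bIdx u w0 ρ (n+1) - 1 + 1 = bIdx u w0 ρ (n+1) := by omega
      have hpl : G.E (ρ (bIdx u w0 ρ (n+1) - 1)) (ρ (bIdx u w0 ρ (n+1) - 1 + 1)) := hplay _
      rw [h5, hj1] at hpl
      rw [hu1, restr_E_self]
      exact ⟨hpl, hne1⟩

lemma LBF_spec (hB : (setOf (isB u w0 ρ)).Infinite) : ∀ k,
    (Nat.count (isB u w0 ρ) (k+1) = 0 → LBF u w0 ρ k = []) ∧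
    (∀ c, Nat.count (isB u w0 ρ) (k+1) = c + 1 →
      LBF u w0 ρ k = List.ofFn fun j : Fin (c+2) => thB u w0 ρ j.1) := by
  intro k
  induction k with
  | zero =>
    have hc0 : Nat.count (isB u w0 ρ) 1 = 0 := by
      rw [Nat.count_succ, Nat.count_zero, if_neg isB_not_zero]
    constructor
    · intro _; rw [LBF]
    · intro c hc; rw [hc0] at hc; omega
  | succ k ih =>
    by_cases hs : sideF u w0 ρ (k+1) = true
    · have hnB : ¬ isB u w0 ρ (k+1) := by simp [isB, hs]
      have hcc : Nat.count (isB u w0 ρ) (k+1+1) = Nat.count (isB u w0 ρ) (k+1) := by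
        rw [Nat.count_succ, if_neg hnB, Nat.add_zero]
      constructor
      · intro h0; rw [LBF, if_pos hs]; exact ih.1 (by omega)
      · intro c hcc2; rw [LBF, if_pos hs]; exact ih.2 c (by omega)
    · have hsf : sideF u w0 ρ (k+1) = false := by simpa using hs
      have hBk : isB u w0 ρ (k+1) := hsf
      have hcc : Nat.count (isB u w0 ρ) (k+1+1) = Nat.count (isB u w0 ρ) (k+1) + 1 := by
        rw [Nat.count_succ, if_pos hBk]
      have hnth : bIdx u w0 ρ (Nat.count (isB u w0 ρ) (k+1)) = k + 1 := Nat.nth_count hBk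
      constructor
      · intro h0; omega
      · intro c hcc2
        have hcount : Nat.count (isB u w0 ρ) (k+1) = c := by omega
        rw [LBF, if_neg hs]
        rcases Nat.eq_zero_or_pos c with hc0 | hcpos
        · subst hc0
          have hLB : LBF u w0 ρ k = [] := ih.1 (by omega)
          rw [hLB]
          have h1 : bIdx u w0 ρ 0 = k + 1 := by rw [← hcount]; exact hnth
          have h2 : (List.ofFn fun j : Fin 2 => thB u w0 ρ j.1)
              = [thB u w0 ρ 0, thB u w0 ρ 1] := by
            simp [List.ofFn_succ]
          rw [h2, thB_zero, thB_succ, h1]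
          simp
        · obtain ⟨c', rfl⟩ : ∃ c', c = c' + 1 := ⟨c - 1, by omega⟩
          have hLB : LBF u w0 ρ k = List.ofFn fun j : Fin (c'+2) => thB u w0 ρ j.1 :=
            ih.2 c' (by omega)
          rw [hLB]
          have hnonempty : ¬ ((List.ofFn fun j : Fin (c'+2) => thB u w0 ρ j.1).isEmpty = true) := by
            intro h
            have h2 := List.isEmpty_iff.1 h
            exact ofFn_ne_nil (fun j => thB u w0 ρ j) (c'+1) h2
          rw [if_neg hnonempty]
          have h1 : bIdx u w0 ρ (c'+1) = k + 1 := by rw [← hcount]; exact hnth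
          have h2 : ρ (k+1) = thB u w0 ρ (c'+2) := by rw [thB_succ, h1]
          rw [h2, ← ofFn_snoc (fun j => thB u w0 ρ j) (c'+2)]
  
lemma LBF_dropLast (hB : (setOf (isB u w0 ρ)).Infinite) (n : ℕ) :
    (LBF u w0 ρ (bIdx u w0 ρ n)).dropLast = List.ofFn fun j : Fin (n+1) => thB u w0 ρ j.1 := by
  have hc : Nat.count (isB u w0 ρ) (bIdx u w0 ρ n + 1) = n + 1 := by
    rw [Nat.count_succ, bIdx_count hB, if_pos (show isB u w0 ρ (bIdx u w0 ρ n) from isB_bIdx hB n)]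
  rw [(LBF_spec hB (bIdx u w0 ρ n)).2 n hc, ofFn_snoc (fun j => thB u w0 ρ j) (n+1),
    dropLast_snoc]

lemma thB_compliant (hB : (setOf (isB u w0 ρ)).Infinite) (hu : G.owner u = 0)
    {τA τB : Strategy V} (hc : Compliant G 1 (comb u w0 τA τB) ρ) {hDB} :
    Compliant (restr G u (fun z => z ≠ w0) hDB) 1 τB (thB u w0 ρ) := by
  intro m h1
  match m, h1 with
  | 0, h1 =>
    exfalso
    have h1' : G.owner u = 1 := h1
    rw [hu] at h1'
    exact absurd h1' (by decide)
  | n+1, h1 =>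
    have h1' : G.owner (ρ (bIdx u w0 ρ n)) = 1 := h1
    have hne : ρ (bIdx u w0 ρ n) ≠ u := ne_of_owner h1' hu
    have hs : sideF u w0 ρ (bIdx u w0 ρ n + 1) = false := by
      rw [sideF_succ_ne hne]; exact isB_bIdx hB n
    have hadj : bIdx u w0 ρ (n+1) = bIdx u w0 ρ n + 1 :=
      nth_succ_eq hB (show isB u w0 ρ (bIdx u w0 ρ n + 1) from hs)
    have hck := hc (bIdx u w0 ρ n) h1'
    rw [comb_eval, if_neg (by simp [isB_bIdx hB n])] at hck
    show ρ (bIdx u w0 ρ (n+1))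
        = τB (List.ofFn fun j : Fin (n+1) => thB u w0 ρ j.1) (ρ (bIdx u w0 ρ n))
    rw [hadj, hck, LBF_dropLast hB n]

lemma thB_edge_occ (hB : (setOf (isB u w0 ρ)).Infinite) (n : ℕ) :
    ∃ k, n ≤ k ∧ ρ k = thB u w0 ρ n ∧ ρ (k+1) = thB u w0 ρ (n+1) := by
  match n with
  | 0 =>
    obtain ⟨hprev, -⟩ := b0_facts hB
    have h5 : bIdx u w0 ρ 0 - 1 + 1 = bIdx u w0 ρ 0 := by
      have := bIdx_pos hB; omega
    exact ⟨bIdx u w0 ρ 0 - 1, Nat.zero_le _, by rw [hprev, thB_zero], by rw [h5, thB_succ]⟩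
  | m+1 =>
    have hle : bIdx u w0 ρ 0 + m ≤ bIdx u w0 ρ m := nth_zero_add_le hB m
    have hpos : 1 ≤ bIdx u w0 ρ 0 := bIdx_pos hB
    rcases bStep hB m with hadj | ⟨hu1, hj1, -, hgap⟩
    · refine ⟨bIdx u w0 ρ m, by omega, by rw [thB_succ], ?_⟩
      rw [← hadj, thB_succ]
    · have hle2 : bIdx u w0 ρ 0 + (m+1) ≤ bIdx u w0 ρ (m+1) := nth_zero_add_le hB (m+1)
      refine ⟨bIdx u w0 ρ (m+1) - 1, by omega, ?_, ?_⟩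
      · rw [hj1, thB_succ, hu1]
      · have h5 : bIdx u w0 ρ (m+1) - 1 + 1 = bIdx u w0 ρ (m+1) := by omega
        rw [h5, thB_succ]

lemma edge_to_thB (hB : (setOf (isB u w0 ρ)).Infinite) {k : ℕ}
    (hs : sideF u w0 ρ (k+1) = false) :
    ∃ m, bIdx u w0 ρ m = k + 1 ∧ thB u w0 ρ m = ρ k ∧ thB u w0 ρ (m+1) = ρ (k+1) := by
  have hiB : isB u w0 ρ (k+1) := hs
  have hnth : bIdx u w0 ρ (Nat.count (isB u w0 ρ) (k+1)) = k + 1 := Nat.nth_count hiB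
  refine ⟨Nat.count (isB u w0 ρ) (k+1), hnth, ?_, by rw [thB_succ, hnth]⟩
  rcases Nat.eq_zero_or_pos (Nat.count (isB u w0 ρ) (k+1)) with hc0 | hcpos
  · rw [hc0, thB_zero]
    rw [hc0] at hnth
    have hsk : sideF u w0 ρ k = true := by
      have hni : ¬ isB u w0 ρ k := lt_nth_zero hB (show k < bIdx u w0 ρ 0 by omega)
      simpa [isB] using hni
    exact (switch_TF hsk hs).1.symm
  · obtain ⟨m', hm⟩ : ∃ m', Nat.count (isB u w0 ρ) (k+1) = m' + 1 :=
      ⟨Nat.count (isB u w0 ρ) (k+1) - 1, by omega⟩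
    rw [hm] at hnth ⊢
    rw [thB_succ]
    have h1 : bIdx u w0 ρ m' < k + 1 := by
      rw [← hnth]; exact bIdx_lt hB (Nat.lt_succ_self m')
    by_cases hbk : bIdx u w0 ρ m' = k
    · rw [hbk]
    · have h2 : bIdx u w0 ρ m' < k := by omega
      have hskT : sideF u w0 ρ k = true := bIdx_between (n := m') hB h2 (by omega)
      have hswk := switch_TF hskT hs
      have h4 : sideF u w0 ρ (bIdx u w0 ρ m' + 1) = true :=
        bIdx_between (n := m') hB (Nat.lt_succ_self _) (by omega)
      have h5 := switch_FT (isB_bIdx hB m') h4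
      rw [h5.1, hswk.1]
  
end ThreadB

end PosWitness

namespace PosWitness

variable {V : Type u}

open scoped Classical

section Transfer

variable {G : GameGraph V} {u w0 : V} {ρ : ℕ → V}

lemma sides_cases (u w0 : V) (ρ : ℕ → V) (k : ℕ) : isA u w0 ρ k ∨ isB u w0 ρ k := by
  unfold isA isB
  cases sideF u w0 ρ k
  · right; rfl
  · left; rfl

lemma one_inf (u w0 : V) (ρ : ℕ → V) :
    (setOf (isA u w0 ρ)).Infinite ∨ (setOf (isB u w0 ρ)).Infinite := by
  by_contra h
  push_neg at h
  obtain ⟨hA, hB⟩ := h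
  have huniv : (Set.univ : Set ℕ) ⊆ setOf (isA u w0 ρ) ∪ setOf (isB u w0 ρ) := by
    intro k _
    rcases sides_cases u w0 ρ k with h | h
    · exact Or.inl h
    · exact Or.inr h
  exact Set.infinite_univ ((hA.union hB).subset huniv)

lemma infOft_thA (hA : (setOf (isA u w0 ρ)).Infinite) {x : V} (h : InfOft (thA u w0 ρ) x) :
    InfOft ρ x := by
  intro n
  obtain ⟨m, hm, he⟩ := h n
  exact ⟨aIdx u w0 ρ m, le_trans hm (aIdx_le_self hA m), he⟩

lemma infOft_thB (hB : (setOf (isB u w0 ρ)).Infinite) {x : V} (h : InfOft (thB u w0 ρ) x) :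
    InfOft ρ x := by
  intro n
  obtain ⟨m, hm, he⟩ := h (n + 1)
  obtain ⟨j, rfl⟩ : ∃ j, m = j + 1 := ⟨m - 1, by omega⟩
  rw [thB_succ] at he
  exact ⟨bIdx u w0 ρ j, by have := bIdx_le_self hB j; omega, he⟩

lemma infOft_split (hA : (setOf (isA u w0 ρ)).Infinite) (hB : (setOf (isB u w0 ρ)).Infinite)
    {x : V} (h : InfOft ρ x) : InfOft (thA u w0 ρ) x ∨ InfOft (thB u w0 ρ) x := by
  by_contra hcon
  push_neg at hcon
  obtain ⟨h1, h2⟩ := hcon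
  unfold InfOft at h1 h2
  push_neg at h1 h2
  obtain ⟨nA, hnA⟩ := h1
  obtain ⟨nB, hnB⟩ := h2
  obtain ⟨k, hk, hkx⟩ := h (max (aIdx u w0 ρ nA) (bIdx u w0 ρ nB) + 1)
  rcases sides_cases u w0 ρ k with hs | hs
  · obtain ⟨m, hm⟩ := vert_to_thA hs
    have hmn : nA ≤ m := by
      by_contra hlt
      have := aIdx_lt hA (show m < nA by omega)
      omega
    exact hnA m hmn (by unfold thA; rw [hm]; exact hkx)
  · have hnth : bIdx u w0 ρ (Nat.count (isB u w0 ρ) k) = k := Nat.nth_count hs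
    set m := Nat.count (isB u w0 ρ) k with hmdef
    have hmn : nB ≤ m := by
      by_contra hlt
      have := bIdx_lt hB (show m < nB by omega)
      omega
    exact hnB (m+1) (by omega) (by rw [thB_succ, hnth]; exact hkx)

lemma edgeInfOft_thA (hA : (setOf (isA u w0 ρ)).Infinite) {e : V × V}
    (h : EdgeInfOft (thA u w0 ρ) e) : EdgeInfOft ρ e := by
  intro n
  obtain ⟨m, hm, he1, he2⟩ := h n
  obtain ⟨k, hk, hk1, hk2⟩ := thA_edge_occ hA m
  exact ⟨k, le_trans hm hk, by rw [hk1, he1], by rw [hk2, he2]⟩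

lemma edgeInfOft_thB (hB : (setOf (isB u w0 ρ)).Infinite) {e : V × V}
    (h : EdgeInfOft (thB u w0 ρ) e) : EdgeInfOft ρ e := by
  intro n
  obtain ⟨m, hm, he1, he2⟩ := h n
  obtain ⟨k, hk, hk1, hk2⟩ := thB_edge_occ hB m
  exact ⟨k, le_trans hm hk, by rw [hk1, he1], by rw [hk2, he2]⟩

lemma edgeInfOft_split (hA : (setOf (isA u w0 ρ)).Infinite)
    (hB : (setOf (isB u w0 ρ)).Infinite) {e : V × V} (h : EdgeInfOft ρ e) :
    EdgeInfOft (thA u w0 ρ) e ∨ EdgeInfOft (thB u w0 ρ) e := by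
  by_contra hcon
  push_neg at hcon
  obtain ⟨h1, h2⟩ := hcon
  unfold EdgeInfOft at h1 h2
  push_neg at h1 h2
  obtain ⟨nA, hnA⟩ := h1
  obtain ⟨nB, hnB⟩ := h2
  obtain ⟨k, hk, hk1, hk2⟩ := h (max (aIdx u w0 ρ (nA+1)) (bIdx u w0 ρ (nB+1)) + 1)
  rcases sides_cases u w0 ρ (k+1) with hs | hs
  · obtain ⟨m, hm0, hm1, hm2⟩ := edge_to_thA hA hs
    have hmn : nA ≤ m := by
      by_contra hlt
      have := aIdx_lt hA (show m + 1 < nA + 1 by omega)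
      omega
    exact hnA m hmn (by rw [hm1]; exact hk1) (by rw [hm2]; exact hk2)
  · obtain ⟨m, hm0, hm1, hm2⟩ := edge_to_thB hB hs
    have hmn : nB ≤ m := by
      by_contra hlt
      have := bIdx_lt hB (show m < nB + 1 by omega)
      omega
    exact hnB m hmn (by rw [hm1]; exact hk1) (by rw [hm2]; exact hk2)

lemma tail_thA (hA : (setOf (isA u w0 ρ)).Infinite)
    (hfin : ¬ (setOf (isB u w0 ρ)).Infinite) :
    ∃ N M, ∀ j, ρ (N + j) = thA u w0 ρ (M + j) := by
  rw [Set.not_infinite] at hfin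
  obtain ⟨N0, hN0⟩ := hfin.bddAbove
  set N := N0 + 1 with hN
  have hside : ∀ k, N ≤ k → sideF u w0 ρ k = true := by
    intro k hk
    rcases sides_cases u w0 ρ k with h | h
    · exact h
    · exact absurd (hN0 h) (by omega)
  have hclaim : ∀ j, aIdx u w0 ρ (Nat.count (isA u w0 ρ) N + j) = N + j := by
    intro j
    induction j with
    | zero =>
      rw [Nat.add_zero, Nat.add_zero]
      exact Nat.nth_count (show isA u w0 ρ N from hside N le_rfl)
    | succ j ih =>
      have hnext : isA u w0 ρ (aIdx u w0 ρ (Nat.count (isA u w0 ρ) N + j) + 1) := by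
        show sideF u w0 ρ _ = true
        apply hside
        omega
      have h2 := nth_succ_eq hA hnext
      have h3 : Nat.count (isA u w0 ρ) N + (j + 1) = (Nat.count (isA u w0 ρ) N + j) + 1 := by
        omega
      rw [h3]
      show aIdx u w0 ρ ((Nat.count (isA u w0 ρ) N + j) + 1) = N + (j + 1)
      calc aIdx u w0 ρ ((Nat.count (isA u w0 ρ) N + j) + 1)
          = aIdx u w0 ρ (Nat.count (isA u w0 ρ) N + j) + 1 := h2
        _ = N + (j + 1) := by omega
  exact ⟨N, Nat.count (isA u w0 ρ) N, fun j => by unfold thA; rw [hclaim j]⟩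

lemma tail_thB (hB : (setOf (isB u w0 ρ)).Infinite)
    (hfin : ¬ (setOf (isA u w0 ρ)).Infinite) :
    ∃ N M, ∀ j, ρ (N + j) = thB u w0 ρ (M + j) := by
  rw [Set.not_infinite] at hfin
  obtain ⟨N0, hN0⟩ := hfin.bddAbove
  set N := N0 + 1 with hN
  have hside : ∀ k, N ≤ k → sideF u w0 ρ k = false := by
    intro k hk
    rcases sides_cases u w0 ρ k with h | h
    · exact absurd (hN0 h) (by omega)
    · exact h
  have hclaim : ∀ j, bIdx u w0 ρ (Nat.count (isB u w0 ρ) N + j) = N + j := by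
    intro j
    induction j with
    | zero =>
      rw [Nat.add_zero, Nat.add_zero]
      exact Nat.nth_count (show isB u w0 ρ N from hside N le_rfl)
    | succ j ih =>
      have hnext : isB u w0 ρ (bIdx u w0 ρ (Nat.count (isB u w0 ρ) N + j) + 1) := by
        show sideF u w0 ρ _ = false
        apply hside
        omega
      have h2 := nth_succ_eq hB hnext
      have h3 : Nat.count (isB u w0 ρ) N + (j + 1) = (Nat.count (isB u w0 ρ) N + j) + 1 := by
        omega
      rw [h3]
      show bIdx u w0 ρ ((Nat.count (isB u w0 ρ) N + j) + 1) = N + (j + 1)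
      calc bIdx u w0 ρ ((Nat.count (isB u w0 ρ) N + j) + 1)
          = bIdx u w0 ρ (Nat.count (isB u w0 ρ) N + j) + 1 := h2
        _ = N + (j + 1) := by omega
  refine ⟨N, Nat.count (isB u w0 ρ) N + 1, fun j => ?_⟩
  have h4 : Nat.count (isB u w0 ρ) N + 1 + j = (Nat.count (isB u w0 ρ) N + j) + 1 := by omega
  rw [h4, thB_succ, hclaim j]

end Transfer

section CombineWin

variable (Hc : Set (Set (V × V))) (P : V → ℕ)

lemma combine_win {G : GameGraph V} {u w0 : V} (hu : G.owner u = 0) (hEuw0 : G.E u w0)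
    {hDA : ∃ y, G.E u y ∧ (fun z => z = w0) y} {hDB : ∃ y, G.E u y ∧ (fun z => z ≠ w0) y}
    {τA τB : Strategy V} {v : V}
    (hA : WinsFrom (restr G u (fun z => z = w0) hDA) 1 (WSet Hc P)ᶜ τA v)
    (hB : WinsFrom (restr G u (fun z => z ≠ w0) hDB) 1 (WSet Hc P)ᶜ τB u) :
    ∃ τ, WinsFrom G 1 (WSet Hc P)ᶜ τ v := by
  refine ⟨comb u w0 τA τB, ?_, ?_⟩
  · -- validity
    intro h x hx
    rw [comb]
    split_ifs with hsplit
    · have hval : (restr G u (fun z => z = w0) hDA).E x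
          (τA (stOf u w0 (h ++ [x])).2.2.1.dropLast x) := hA.1 _ x hx
      exact restr_E_sub hval
    · have hval : (restr G u (fun z => z ≠ w0) hDB).E x
          (τB (stOf u w0 (h ++ [x])).2.2.2.dropLast x) := hB.1 _ x hx
      exact restr_E_sub hval
  · -- all compliant plays lose
    intro ρ hp hcomp h0
    show ρ ∉ WSet Hc P
    by_cases hBinf : (setOf (isB u w0 ρ)).Infinite
    · have hBnot : thB u w0 ρ ∉ WSet Hc P :=
        hB.2 (thB u w0 ρ) (thB_isPlay hBinf hp) (thB_compliant hBinf hu hcomp) (thB_zero u w0 ρ)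
      by_cases hAinf : (setOf (isA u w0 ρ)).Infinite
      · have hAnot : thA u w0 ρ ∉ WSet Hc P :=
          hA.2 (thA u w0 ρ) (thA_isPlay hAinf hp hEuw0) (thA_compliant hAinf hu hcomp)
            (thA_zero h0)
        exact w_combine Hc P (fun x => infOft_thA hAinf) (fun x => infOft_thB hBinf)
          (fun x => infOft_split hAinf hBinf) (fun e => edgeInfOft_thA hAinf)
          (fun e => edgeInfOft_thB hBinf) (fun e => edgeInfOft_split hAinf hBinf)
          hAnot hBnot
      · obtain ⟨N, M, hNM⟩ := tail_thB hBinf hAinf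
        intro hW
        exact hBnot (w_mono Hc P (tailEq_sameInf N M hNM) hW)
    · have hAinf : (setOf (isA u w0 ρ)).Infinite :=
        (one_inf u w0 ρ).resolve_right hBinf
      have hAnot : thA u w0 ρ ∉ WSet Hc P :=
        hA.2 (thA u w0 ρ) (thA_isPlay hAinf hp hEuw0) (thA_compliant hAinf hu hcomp)
          (thA_zero h0)
      obtain ⟨N, M, hNM⟩ := tail_thA hAinf hBinf
      intro hW
      exact hAnot (w_mono Hc P (tailEq_sameInf N M hNM) hW)

end CombineWin

end PosWitness

namespace PosWitness

variable {V : Type u}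

open scoped Classical

noncomputable def pedges (G : GameGraph V) : ℕ :=
  {p : V × V | G.owner p.1 = 0 ∧ G.E p.1 p.2}.ncard

lemma pedges_lt [Finite V] {G : GameGraph V} {u : V} {D : V → Prop} {hD : ∃ y, G.E u y ∧ D y}
    (hu : G.owner u = 0) {z : V} (hz : G.E u z) (hDz : ¬ D z) :
    pedges (restr G u D hD) < pedges G := by
  apply Set.ncard_lt_ncard
  · rw [Set.ssubset_def]
    constructor
    · rintro ⟨x, y⟩ ⟨h1, h2⟩
      exact ⟨h1, restr_E_sub h2⟩
    · intro hsub
      have hmem : ((u, z) : V × V) ∈ {p : V × V | G.owner p.1 = 0 ∧ G.E p.1 p.2} := ⟨hu, hz⟩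
      have h2 := hsub hmem
      exact hDz (restr_E_self.1 h2.2).2
  · exact Set.toFinite _

variable (Hc : Set (Set (V × V))) (P : V → ℕ)

lemma dich [Finite V] : ∀ n (G : GameGraph V), pedges G = n → ∀ v : V,
    (∃ σ, Positional σ ∧ WinsFrom G 0 (WSet Hc P) σ v) ∨
      (∃ τ, WinsFrom G 1 (WSet Hc P)ᶜ τ v) := by
  intro n
  induction n using Nat.strong_induction_on with
  | _ n IH =>
    intro G hn v
    by_cases hb : ∃ x y y', G.owner x = 0 ∧ G.E x y ∧ G.E x y' ∧ y ≠ y'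
    · obtain ⟨u, y, y', hu, hy, hy', hne⟩ := hb
      have hDA : ∃ z, G.E u z ∧ (fun z => z = y) z := ⟨y, hy, rfl⟩
      have hDB : ∃ z, G.E u z ∧ (fun z => z ≠ y) z := ⟨y', hy', fun h => hne h.symm⟩
      have mA : pedges (restr G u (fun z => z = y) hDA) < n :=
        hn ▸ pedges_lt hu hy' (fun h => hne h.symm)
      have mB : pedges (restr G u (fun z => z ≠ y) hDB) < n :=
        hn ▸ pedges_lt hu hy (fun h => h rfl)
      rcases IH _ mA (restr G u (fun z => z = y) hDA) rfl v with ⟨σ, hσp, hσw⟩ | ⟨τA, hτA⟩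
      · exact Or.inl ⟨σ, hσp, lift_win0 Hc P hu hσw⟩
      rcases IH _ mB (restr G u (fun z => z ≠ y) hDB) rfl v with ⟨σ, hσp, hσw⟩ | ⟨τv, hτv⟩
      · exact Or.inl ⟨σ, hσp, lift_win0 Hc P hu hσw⟩
      rcases IH _ mB (restr G u (fun z => z ≠ y) hDB) rfl u with ⟨π, hπp, hπw⟩ | ⟨τB, hτB⟩
      · exact Or.inr ⟨τv, avoid_win Hc P hu hπp hπw hτv⟩
      · exact Or.inr (combine_win Hc P hu hy hτA hτB)
    · push_neg at hb
      exact base_dich Hc P (fun x z z' h1 h2 h3 => hb x z z' h1 h2 h3) v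

theorem main_pos [Finite V] (G : GameGraph V) (v : V)
    (hwin : ∃ σ, WinsFrom G 0 (WSet Hc P) σ v) :
    ∃ σ, Positional σ ∧ WinsFrom G 0 (WSet Hc P) σ v := by
  classical
  rcases dich Hc P (pedges G) G rfl v with h | ⟨τ, hτ⟩
  · exact h
  · exfalso
    obtain ⟨σ0, hσ0⟩ := hwin
    set g : List V → V → V := fun h x => if G.owner x = 0 then σ0 h x else τ h x with hg
    set ρ : ℕ → V := bp g v with hρ
    have hp : IsPlay G ρ := by
      intro k
      rw [hρ, bp_succ, ← hρ, hg]
      dsimp only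
      rcases fin2 (G.owner (ρ k)) with h1 | h1
      · rw [if_pos h1]
        exact hσ0.1 _ _ h1
      · rw [if_neg (by rw [h1]; decide)]
        exact hτ.1 _ _ h1
    have hc0 : Compliant G 0 σ0 ρ := by
      intro k hk
      rw [hρ, bp_succ, ← hρ, hg]
      dsimp only
      rw [if_pos hk]
    have hc1 : Compliant G 1 τ ρ := by
      intro k hk
      rw [hρ, bp_succ, ← hρ, hg]
      dsimp only
      rw [if_neg (by rw [hk]; decide)]
    exact (hτ.2 ρ hp hc1 (by rw [hρ, bp_zero])) (hσ0.2 ρ hp hc0 (by rw [hρ, bp_zero]))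

end PosWitness


/-- In any parity game augmented with live groups, if Player 0 has
any winning strategy from a vertex `v` in the augmented game
`(G, Parity(ℙ), ψ_glive(ℋ))`, then she has a positional one. -/
theorem stmt4 (V : Type) [Fintype V] (G : GameGraph V)
    (d : ℕ) (P : V → ℕ) (hP : ∀ v, P v ≤ d)
    (Hc : Set (Set (V × V))) (hHE : ∀ H ∈ Hc, ∀ e ∈ H, G.E e.1 e.2)
    (v : V)
    (hwin : ∃ σ, WinsFrom G 0 {ρ | psiGlive Hc ρ → ParityWin P ρ} σ v) :
    ∃ σ, Positional σ ∧ WinsFrom G 0 {ρ | psiGlive Hc ρ → ParityWin P ρ} σ v := by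
  exact PosWitness.main_pos Hc P G v hwin
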